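/- If X* is a global minimizer of F(X) = f(X) + λ‖X‖_* with SVD X* = U* S* (V*)^T, then for any k ≥ rank(X*), setting W* = U* (S*)^{1/2} and H* = V* (S*)^{1/2} (padded with zero columns to width k) gives a global minimizer of F(W,H) = f(W H^T) + (λ/2)(‖W‖_F² + ‖H‖_F²) over R^{m×k} × R^{n×k}. -/

import Mathlib

open Matrix

noncomputable def frobNorm {m n : ℕ} (X : Matrix (Fin m) (Fin n) ℝ) : ℝ :=
  Real.sqrt (∑ i, ∑ j, (X i j) ^ 2)

noncomputable def nuclearNorm {m n : ℕ} (X : Matrix (Fin m) (Fin n) ℝ) : ℝ :=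
  ∑ i, Real.sqrt ((by simpa using Matrix.isHermitian_conjTranspose_mul_self X : (Xᵀ * X).IsHermitian).eigenvalues i)

lemma traceTM {a b : ℕ} (X Y : Matrix (Fin a) (Fin b) ℝ) :
    Matrix.trace (Xᵀ * Y) = ∑ j, ∑ i, X i j * Y i j := by
  simp [Matrix.trace, Matrix.diag, Matrix.mul_apply]

lemma traceTM_self_nonneg {a b : ℕ} (X : Matrix (Fin a) (Fin b) ℝ) :
    0 ≤ Matrix.trace (Xᵀ * X) := by
  rw [traceTM]
  exact Finset.sum_nonneg fun j _ => Finset.sum_nonneg fun i _ => mul_self_nonneg _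

lemma frobNorm_sq {a b : ℕ} (X : Matrix (Fin a) (Fin b) ℝ) :
    frobNorm X ^ 2 = Matrix.trace (Xᵀ * X) := by
  rw [frobNorm, Real.sq_sqrt (by positivity), traceTM, Finset.sum_comm]
  simp [sq]

lemma ct_eq {a b : ℕ} (X : Matrix (Fin a) (Fin b) ℝ) : Xᴴ = Xᵀ := by
  ext i j; simp [Matrix.conjTranspose_apply]

lemma dot_self_nonneg {a : ℕ} (v : Fin a → ℝ) : 0 ≤ v ⬝ᵥ v :=
  Finset.sum_nonneg fun i _ => mul_self_nonneg _

lemma dot_mulVec_mulVec {a b : ℕ} (C : Matrix (Fin a) (Fin b) ℝ) (y z : Fin b → ℝ) :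
    (C *ᵥ y) ⬝ᵥ (C *ᵥ z) = y ⬝ᵥ ((Cᵀ * C) *ᵥ z) := by
  rw [Matrix.dotProduct_mulVec, ← Matrix.mulVec_transpose, Matrix.mulVec_mulVec]
  rw [Matrix.dotProduct_mulVec y, ← Matrix.mulVec_transpose,
    Matrix.transpose_mul, Matrix.transpose_transpose]

lemma proj_trace_le {m c : ℕ} (P : Matrix (Fin m) (Fin m) ℝ) (hPs : Pᵀ = P)
    (hPP : P * P = P) (W : Matrix (Fin m) (Fin c) ℝ) :
    Matrix.trace (P * (W * Wᵀ)) ≤ Matrix.trace (Wᵀ * W) := by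
  have e1 : Wᵀ * P * (P * W) = Wᵀ * (P * W) := by
    rw [Matrix.mul_assoc Wᵀ P, ← Matrix.mul_assoc P P, hPP]
  have h : (W - P * W)ᵀ * (W - P * W) = Wᵀ * W - Wᵀ * (P * W) := by
    rw [Matrix.transpose_sub, Matrix.transpose_mul, hPs, Matrix.sub_mul,
      Matrix.mul_sub, Matrix.mul_sub, e1, Matrix.mul_assoc Wᵀ P W]
    abel
  have h2 : 0 ≤ Matrix.trace (Wᵀ * W - Wᵀ * (P * W)) := by
    rw [← h]; exact traceTM_self_nonneg _
  rw [Matrix.trace_sub] at h2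
  have h3 : Matrix.trace (Wᵀ * (P * W)) = Matrix.trace (P * (W * Wᵀ)) := by
    rw [Matrix.trace_mul_comm, Matrix.mul_assoc]
  linarith

lemma sum_fin_dite {r k : ℕ} (hk : r ≤ k) (g : Fin r → ℝ) :
    ∑ j : Fin k, (if h : (j : ℕ) < r then g ⟨j, h⟩ else 0) = ∑ j : Fin r, g j := by
  have h1 : ∑ j : Fin k, (if h : (j : ℕ) < r then g ⟨j, h⟩ else 0)
      = ∑ t ∈ Finset.range k, (if h : t < r then g ⟨t, h⟩ else 0) :=
    Fin.sum_univ_eq_sum_range (fun t : ℕ => if h : t < r then g ⟨t, h⟩ else 0) k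
  have h2 : ∑ j : Fin r, g j
      = ∑ t ∈ Finset.range r, (if h : t < r then g ⟨t, h⟩ else 0) := by
    rw [← Fin.sum_univ_eq_sum_range (fun t : ℕ => if h : t < r then g ⟨t, h⟩ else 0) r]
    apply Finset.sum_congr rfl; intro j _
    simp [j.isLt]
  rw [h1, h2]
  exact (Finset.sum_subset (Finset.range_subset_range.mpr hk)
    (fun x _ hx => dif_neg (fun h => hx (Finset.mem_range.mpr h)))).symm

section Setup

variable {m n : ℕ} (A : Matrix (Fin m) (Fin n) ℝ)

lemma setup_facts :
    ∃ Q : Matrix (Fin n) (Fin n) ℝ,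
      Qᵀ * Q = 1 ∧ Q * Qᵀ = 1 ∧
      Qᵀ * (Aᵀ * (A * Q)) =
        Matrix.diagonal ((by simpa using Matrix.isHermitian_conjTranspose_mul_self A : (Aᵀ * A).IsHermitian).eigenvalues) := by
  have hG : (Aᵀ * A).IsHermitian := by simpa using Matrix.isHermitian_conjTranspose_mul_self A
  refine ⟨(hG.eigenvectorUnitary : Matrix (Fin n) (Fin n) ℝ), ?_, ?_, ?_⟩
  · rw [← ct_eq (hG.eigenvectorUnitary : Matrix (Fin n) (Fin n) ℝ), ← Matrix.star_eq_conjTranspose]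
    exact Matrix.mem_unitaryGroup_iff'.mp hG.eigenvectorUnitary.2
  · rw [← ct_eq (hG.eigenvectorUnitary : Matrix (Fin n) (Fin n) ℝ), ← Matrix.star_eq_conjTranspose]
    exact Matrix.mem_unitaryGroup_iff.mp hG.eigenvectorUnitary.2
  · have h : star (hG.eigenvectorUnitary : Matrix (Fin n) (Fin n) ℝ) * (Aᵀ * A) * (hG.eigenvectorUnitary : Matrix (Fin n) (Fin n) ℝ) =
        Matrix.diagonal (RCLike.ofReal ∘ hG.eigenvalues) := by
      have := hG.conjStarAlgAut_star_eigenvectorUnitary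
      rwa [Unitary.conjStarAlgAut_star_apply] at this
    rw [Matrix.star_eq_conjTranspose, ct_eq] at h
    rw [← Matrix.mul_assoc, ← Matrix.mul_assoc,
      Matrix.mul_assoc _ Aᵀ A]
    rw [h]
    simp [RCLike.ofReal_real_eq_id]

end Setup

lemma nuclear_le {m n k : ℕ} (W : Matrix (Fin m) (Fin k) ℝ) (H : Matrix (Fin n) (Fin k) ℝ) :
    nuclearNorm (W * Hᵀ) ≤ (frobNorm W ^ 2 + frobNorm H ^ 2) / 2 := by
  set A : Matrix (Fin m) (Fin n) ℝ := W * Hᵀ with hA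
  obtain ⟨Q, hQQ, hQQ', hdiag⟩ := setup_facts A
  set μ : Fin n → ℝ := (by simpa using Matrix.isHermitian_conjTranspose_mul_self A : (Aᵀ * A).IsHermitian).eigenvalues with hμdef
  have hμ : ∀ j, 0 ≤ μ j := fun j => Matrix.eigenvalues_conjTranspose_mul_self_nonneg A j
  set s : Fin n → ℝ := fun j => Real.sqrt (μ j) with hsdef
  set d : Fin n → ℝ := fun j => (s j)⁻¹ with hddef
  have hs_sq : ∀ j, s j * s j = μ j := fun j => Real.mul_self_sqrt (hμ j)
  have hdμ : ∀ j, d j * μ j = s j := by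
    intro j
    rcases eq_or_lt_of_le (hμ j) with h | h
    · simp [hddef, hsdef, ← h]
    · have hs0 : s j ≠ 0 := ne_of_gt (Real.sqrt_pos.mpr h)
      rw [← hs_sq j, hddef]
      field_simp
  have hde : ∀ j, d j * (d j * (μ j * d j)) = d j := by
    intro j
    rcases eq_or_lt_of_le (hμ j) with h | h
    · simp [hddef, hsdef, ← h]
    · have hs0 : s j ≠ 0 := ne_of_gt (Real.sqrt_pos.mpr h)
      rw [← hs_sq j, hddef]
      field_simp
  set N : Matrix (Fin m) (Fin n) ℝ := A * Q * Matrix.diagonal d with hNdef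
  have hNT : Nᵀ = Matrix.diagonal d * (Qᵀ * Aᵀ) := by
    rw [hNdef, Matrix.transpose_mul, Matrix.transpose_mul, Matrix.diagonal_transpose]
  have hdiag3 : ∀ P : Matrix (Fin n) (Fin n) ℝ,
      Qᵀ * (Aᵀ * (A * (Q * P))) = Matrix.diagonal μ * P := by
    intro P
    calc Qᵀ * (Aᵀ * (A * (Q * P))) = Qᵀ * (Aᵀ * (A * Q)) * P := by
          simp only [Matrix.mul_assoc]
      _ = Matrix.diagonal μ * P := by rw [hdiag]
  have hNAQ : Nᵀ * (A * Q) = Matrix.diagonal (fun j => d j * μ j) := by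
    calc Nᵀ * (A * Q) = Matrix.diagonal d * (Qᵀ * (Aᵀ * (A * Q))) := by
          rw [hNT]; simp only [Matrix.mul_assoc]
      _ = Matrix.diagonal d * Matrix.diagonal μ := by rw [hdiag]
      _ = _ := by rw [Matrix.diagonal_mul_diagonal]
  have hNN : Nᵀ * N = Matrix.diagonal (fun j => d j * (μ j * d j)) := by
    calc Nᵀ * N = Matrix.diagonal d * (Qᵀ * (Aᵀ * (A * (Q * Matrix.diagonal d)))) := by
          rw [hNT, hNdef]; simp only [Matrix.mul_assoc]
      _ = Matrix.diagonal d * (Matrix.diagonal μ * Matrix.diagonal d) := by rw [hdiag3]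
      _ = _ := by rw [Matrix.diagonal_mul_diagonal, Matrix.diagonal_mul_diagonal]
  have hNe : N * Matrix.diagonal (fun j => d j * (μ j * d j)) = N := by
    rw [hNdef, Matrix.mul_assoc (A * Q), Matrix.diagonal_mul_diagonal]
    congr 1
    exact congrArg Matrix.diagonal (funext hde)
  have hPs : (N * Nᵀ)ᵀ = N * Nᵀ := by
    rw [Matrix.transpose_mul, Matrix.transpose_transpose]
  have hPP : (N * Nᵀ) * (N * Nᵀ) = N * Nᵀ := by
    calc (N * Nᵀ) * (N * Nᵀ) = N * (Nᵀ * N) * Nᵀ := by simp only [Matrix.mul_assoc]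
      _ = N * Matrix.diagonal (fun j => d j * (μ j * d j)) * Nᵀ := by rw [hNN]
      _ = N * Nᵀ := by rw [hNe]
  -- nuclear norm as a trace
  have hnn : nuclearNorm A = Matrix.trace (Nᵀ * (A * Q)) := by
    rw [hNAQ, Matrix.trace_diagonal]
    exact Finset.sum_congr rfl fun j _ => (hdμ j).symm
  set X : Matrix (Fin k) (Fin n) ℝ := Wᵀ * N with hXdef
  set Y : Matrix (Fin k) (Fin n) ℝ := Hᵀ * Q with hYdef
  have h2 : Xᵀ * Y = Nᵀ * (A * Q) := by
    rw [hXdef, hYdef, Matrix.transpose_mul Wᵀ N, Matrix.transpose_transpose, hA]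
    simp only [Matrix.mul_assoc]
  have h3 : Matrix.trace (Xᵀ * X) ≤ frobNorm W ^ 2 := by
    have e : Xᵀ * X = Nᵀ * W * Wᵀ * N := by
      rw [hXdef, Matrix.transpose_mul, Matrix.transpose_transpose]
      simp only [Matrix.mul_assoc]
    rw [e, Matrix.trace_mul_comm, frobNorm_sq]
    have e2 : N * (Nᵀ * W * Wᵀ) = (N * Nᵀ) * (W * Wᵀ) := by simp only [Matrix.mul_assoc]
    rw [e2]
    exact proj_trace_le _ hPs hPP W
  have h4 : Matrix.trace (Yᵀ * Y) = frobNorm H ^ 2 := by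
    have e : Yᵀ * Y = Qᵀ * H * (Hᵀ * Q) := by
      rw [hYdef, Matrix.transpose_mul, Matrix.transpose_transpose]
    rw [e, Matrix.trace_mul_comm, frobNorm_sq]
    have e2 : Hᵀ * Q * (Qᵀ * H) = Hᵀ * (Q * Qᵀ) * H := by simp only [Matrix.mul_assoc]
    rw [e2, hQQ', Matrix.mul_one]
  have hXY : Matrix.trace (Xᵀ * Y) ≤ (Matrix.trace (Xᵀ * X) + Matrix.trace (Yᵀ * Y)) / 2 := by
    rw [traceTM X Y, traceTM X X, traceTM Y Y, ← Finset.sum_add_distrib, Finset.sum_div]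
    apply Finset.sum_le_sum
    intro j _
    rw [← Finset.sum_add_distrib, Finset.sum_div]
    apply Finset.sum_le_sum
    intro i _
    nlinarith [sq_nonneg (X i j - Y i j)]
  rw [hnn, ← h2]
  linarith

lemma trace_le_nuclear {m n : ℕ} (A B : Matrix (Fin m) (Fin n) ℝ)
    (hB : ∀ x : Fin n → ℝ, (B *ᵥ x) ⬝ᵥ (B *ᵥ x) ≤ x ⬝ᵥ x) :
    Matrix.trace (Bᵀ * A) ≤ nuclearNorm A := by
  obtain ⟨Q, hQQ, hQQ', hdiag⟩ := setup_facts A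
  set μ : Fin n → ℝ := (by simpa using Matrix.isHermitian_conjTranspose_mul_self A : (Aᵀ * A).IsHermitian).eigenvalues with hμdef
  have hμ : ∀ j, 0 ≤ μ j := fun j => Matrix.eigenvalues_conjTranspose_mul_self_nonneg A j
  have key : Matrix.trace (Bᵀ * A) = Matrix.trace ((B * Q)ᵀ * (A * Q)) := by
    have e : (B * Q)ᵀ * (A * Q) = Qᵀ * (Bᵀ * A) * Q := by
      rw [Matrix.transpose_mul]
      simp only [Matrix.mul_assoc]
    rw [e, Matrix.trace_mul_cycle, ← Matrix.mul_assoc, hQQ', Matrix.one_mul]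
  rw [key, traceTM]
  show _ ≤ ∑ j, Real.sqrt (μ j)
  apply Finset.sum_le_sum
  intro j _
  have hAcol : ∑ i, (A * Q) i j * (A * Q) i j = μ j := by
    have hmat : (A * Q)ᵀ * (A * Q) = Matrix.diagonal μ := by
      rw [Matrix.transpose_mul]
      simp only [Matrix.mul_assoc]
      exact hdiag
    have h := congrFun (congrFun hmat j) j
    simp only [Matrix.mul_apply, Matrix.transpose_apply, Matrix.diagonal_apply_eq] at h
    rw [← h]
    simp [Matrix.mul_apply]
  have hq1 : ∑ l, Q l j * Q l j = 1 := by
    have h := congrFun (congrFun hQQ j) j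
    simpa [Matrix.mul_apply, Matrix.transpose_apply, Matrix.one_apply_eq] using h
  have hBcol : ∑ i, (B * Q) i j * (B * Q) i j ≤ 1 := by
    have h := hB (fun l => Q l j)
    rw [← hq1]
    simpa [Matrix.mulVec, dotProduct, Matrix.mul_apply] using h
  have hcs := Finset.sum_mul_sq_le_sq_mul_sq Finset.univ
    (fun i => (B * Q) i j) (fun i => (A * Q) i j)
  have h1 : (∑ i, (B * Q) i j * (A * Q) i j) ^ 2 ≤ μ j := by
    calc (∑ i, (B * Q) i j * (A * Q) i j) ^ 2
        ≤ (∑ i, (B * Q) i j ^ 2) * (∑ i, (A * Q) i j ^ 2) := hcs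
      _ ≤ 1 * μ j := by
          apply mul_le_mul
          · simpa [sq] using hBcol
          · simp only [sq]; rw [hAcol]
          · exact Finset.sum_nonneg fun i _ => sq_nonneg _
          · norm_num
      _ = μ j := one_mul _
  calc ∑ i, (B * Q) i j * (A * Q) i j
      ≤ |∑ i, (B * Q) i j * (A * Q) i j| := le_abs_self _
    _ = Real.sqrt ((∑ i, (B * Q) i j * (A * Q) i j) ^ 2) := (Real.sqrt_sq_eq_abs _).symm
    _ ≤ Real.sqrt (μ j) := Real.sqrt_le_sqrt h1

/-- If `X*` globally minimizes the lifted convex objective, with SVD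
`X* = U* S* (V*)ᵀ` (positive singular values `σ`, `r = rank X*`), then for any
`k ≥ r`, `W* = U* (S*)^{1/2}` and `H* = V* (S*)^{1/2}` padded with zero columns to
width `k` form a global minimizer of the factorized objective. -/
theorem mc_min_gives_mf_min {m n r k : ℕ}
    (f : Matrix (Fin m) (Fin n) ℝ → ℝ) (hf : ConvexOn ℝ Set.univ f)
    (lam : ℝ) (hlam : 0 < lam)
    (Xstar : Matrix (Fin m) (Fin n) ℝ)
    (hXmin : IsMinOn (fun X => f X + lam * nuclearNorm X) Set.univ Xstar)
    (U : Matrix (Fin m) (Fin r) ℝ) (V : Matrix (Fin n) (Fin r) ℝ) (σ : Fin r → ℝ)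
    (hU : Uᵀ * U = 1) (hV : Vᵀ * V = 1) (hσ : ∀ i, 0 < σ i)
    (hSVD : Xstar = U * Matrix.diagonal σ * Vᵀ)
    (hrank : Xstar.rank = r)
    (hk : r ≤ k)
    (Wstar : Matrix (Fin m) (Fin k) ℝ)
    (hW : Wstar = Matrix.of fun i (j : Fin k) =>
      if h : (j : ℕ) < r then U i ⟨j, h⟩ * Real.sqrt (σ ⟨j, h⟩) else 0)
    (Hstar : Matrix (Fin n) (Fin k) ℝ)
    (hH : Hstar = Matrix.of fun i (j : Fin k) =>
      if h : (j : ℕ) < r then V i ⟨j, h⟩ * Real.sqrt (σ ⟨j, h⟩) else 0) :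
    IsMinOn
      (fun p : Matrix (Fin m) (Fin k) ℝ × Matrix (Fin n) (Fin k) ℝ =>
        f (p.1 * p.2ᵀ) + lam / 2 * (frobNorm p.1 ^ 2 + frobNorm p.2 ^ 2))
      Set.univ (Wstar, Hstar) := by
  -- column normalization facts
  have hUcol : ∀ t : Fin r, ∑ i, U i t * U i t = 1 := by
    intro t
    have h := congrFun (congrFun hU t) t
    simpa [Matrix.mul_apply, Matrix.transpose_apply, Matrix.one_apply_eq] using h
  have hVcol : ∀ t : Fin r, ∑ i, V i t * V i t = 1 := by
    intro t
    have h := congrFun (congrFun hV t) t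
    simpa [Matrix.mul_apply, Matrix.transpose_apply, Matrix.one_apply_eq] using h
  -- Wstar * Hstarᵀ = Xstar
  have hWH : Wstar * Hstarᵀ = Xstar := by
    ext i j
    rw [Matrix.mul_apply, hSVD]
    have e1 : ∀ l : Fin k, Wstar i l * Hstarᵀ l j
        = (if h : (l : ℕ) < r then U i ⟨l, h⟩ * V j ⟨l, h⟩ * σ ⟨l, h⟩ else 0) := by
      intro l
      rw [Matrix.transpose_apply, hW, hH]
      simp only [Matrix.of_apply]
      by_cases h : (l : ℕ) < r
      · rw [dif_pos h, dif_pos h, dif_pos h]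
        have hs := Real.mul_self_sqrt (hσ ⟨l, h⟩).le
        calc U i ⟨l, h⟩ * Real.sqrt (σ ⟨l, h⟩) * (V j ⟨l, h⟩ * Real.sqrt (σ ⟨l, h⟩))
            = U i ⟨l, h⟩ * V j ⟨l, h⟩ * (Real.sqrt (σ ⟨l, h⟩) * Real.sqrt (σ ⟨l, h⟩)) := by ring
          _ = U i ⟨l, h⟩ * V j ⟨l, h⟩ * σ ⟨l, h⟩ := by rw [hs]
      · simp [h]
    rw [Finset.sum_congr rfl fun l _ => e1 l,
      sum_fin_dite hk (fun l => U i l * V j l * σ l)]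
    rw [Matrix.mul_apply]
    apply Finset.sum_congr rfl
    intro l _
    rw [Matrix.mul_diagonal, Matrix.transpose_apply]
    ring
  -- Frobenius norms
  have hfrobW : frobNorm Wstar ^ 2 = ∑ l, σ l := by
    rw [frobNorm_sq, traceTM]
    have hcol : ∀ j : Fin k, (∑ i, Wstar i j * Wstar i j)
        = (if h : (j : ℕ) < r then σ ⟨j, h⟩ else 0) := by
      intro j
      by_cases h : (j : ℕ) < r
      · rw [dif_pos h]
        rw [hW]; simp only [Matrix.of_apply, dif_pos h]
        calc ∑ i, U i ⟨j, h⟩ * Real.sqrt (σ ⟨j, h⟩) * (U i ⟨j, h⟩ * Real.sqrt (σ ⟨j, h⟩))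
            = (∑ i, U i ⟨j, h⟩ * U i ⟨j, h⟩) * (Real.sqrt (σ ⟨j, h⟩) * Real.sqrt (σ ⟨j, h⟩)) := by
              rw [Finset.sum_mul]; exact Finset.sum_congr rfl fun i _ => by ring
          _ = σ ⟨j, h⟩ := by
              rw [hUcol, Real.mul_self_sqrt (hσ _).le, one_mul]
      · rw [dif_neg h, hW]
        simp only [Matrix.of_apply, dif_neg h, zero_mul]
        simp
    rw [Finset.sum_congr rfl fun j _ => hcol j, sum_fin_dite hk σ]
  have hfrobH : frobNorm Hstar ^ 2 = ∑ l, σ l := by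
    rw [frobNorm_sq, traceTM]
    have hcol : ∀ j : Fin k, (∑ i, Hstar i j * Hstar i j)
        = (if h : (j : ℕ) < r then σ ⟨j, h⟩ else 0) := by
      intro j
      by_cases h : (j : ℕ) < r
      · rw [dif_pos h]
        rw [hH]; simp only [Matrix.of_apply, dif_pos h]
        calc ∑ i, V i ⟨j, h⟩ * Real.sqrt (σ ⟨j, h⟩) * (V i ⟨j, h⟩ * Real.sqrt (σ ⟨j, h⟩))
            = (∑ i, V i ⟨j, h⟩ * V i ⟨j, h⟩) * (Real.sqrt (σ ⟨j, h⟩) * Real.sqrt (σ ⟨j, h⟩)) := by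
              rw [Finset.sum_mul]; exact Finset.sum_congr rfl fun i _ => by ring
          _ = σ ⟨j, h⟩ := by
              rw [hVcol, Real.mul_self_sqrt (hσ _).le, one_mul]
      · rw [dif_neg h, hH]
        simp only [Matrix.of_apply, dif_neg h, zero_mul]
        simp
    rw [Finset.sum_congr rfl fun j _ => hcol j, sum_fin_dite hk σ]
  -- trace lower bound data
  have htr_star : Matrix.trace ((U * Vᵀ)ᵀ * Xstar) = ∑ l, σ l := by
    rw [hSVD, Matrix.transpose_mul, Matrix.transpose_transpose]
    have e : (V * Uᵀ) * (U * Matrix.diagonal σ * Vᵀ) = V * (Matrix.diagonal σ * Vᵀ) := by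
      simp only [Matrix.mul_assoc]
      rw [← Matrix.mul_assoc Uᵀ U, hU, Matrix.one_mul]
    rw [e, ← Matrix.mul_assoc, Matrix.trace_mul_cycle, hV, Matrix.one_mul,
      Matrix.trace_diagonal]
  have hcontr : ∀ x : Fin n → ℝ,
      ((U * Vᵀ) *ᵥ x) ⬝ᵥ ((U * Vᵀ) *ᵥ x) ≤ x ⬝ᵥ x := by
    intro x
    rw [dot_mulVec_mulVec]
    have hCC : (U * Vᵀ)ᵀ * (U * Vᵀ) = V * Vᵀ := by
      rw [Matrix.transpose_mul, Matrix.transpose_transpose]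
      simp only [Matrix.mul_assoc]
      rw [← Matrix.mul_assoc Uᵀ U, hU, Matrix.one_mul]
    rw [hCC]
    set y : Fin r → ℝ := Vᵀ *ᵥ x with hy
    have h1 : (V * Vᵀ) *ᵥ x = V *ᵥ y := by rw [hy, ← Matrix.mulVec_mulVec]
    have h2 : x ⬝ᵥ (V *ᵥ y) = y ⬝ᵥ y := by
      rw [Matrix.dotProduct_mulVec, ← Matrix.mulVec_transpose]
    have h3 : (V *ᵥ y) ⬝ᵥ (V *ᵥ y) = y ⬝ᵥ y := by
      rw [dot_mulVec_mulVec, hV, Matrix.one_mulVec]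
    have h5 : (V *ᵥ y) ⬝ᵥ x = y ⬝ᵥ y := by rw [dotProduct_comm]; exact h2
    have h4 : 0 ≤ (x - V *ᵥ y) ⬝ᵥ (x - V *ᵥ y) := dot_self_nonneg _
    rw [sub_dotProduct, dotProduct_sub, dotProduct_sub, h2, h5, h3] at h4
    rw [h1, h2]
    linarith
  -- assemble
  rw [isMinOn_iff]
  rintro ⟨W, H⟩ -
  simp only
  have hmin := (isMinOn_iff.mp hXmin) (W * Hᵀ) (Set.mem_univ _)
  have hle := nuclear_le W H
  have hge : (∑ l, σ l) ≤ nuclearNorm Xstar := by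
    rw [← htr_star]
    exact trace_le_nuclear Xstar (U * Vᵀ) hcontr
  have h6 : lam * nuclearNorm (W * Hᵀ) ≤ lam * ((frobNorm W ^ 2 + frobNorm H ^ 2) / 2) :=
    mul_le_mul_of_nonneg_left hle hlam.le
  have h7 : lam * (∑ l, σ l) ≤ lam * nuclearNorm Xstar :=
    mul_le_mul_of_nonneg_left hge hlam.le
  rw [hWH, hfrobW, hfrobH]
  linarith
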